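/- Let s ≤ t be positive integers with ⌊t/s⌋ = r, ⌈t/s⌉ = r+1, and t(r+1) ≤ s². Suppose A₁, A₂, …, A_{s+1} are squares of side s in (ℤ/tℤ)² such that both the family A₁,…,A_s and the family A₂,…,A_{s+1} cover (ℤ/tℤ)². Then for each coordinate γ ∈ {1,2}, the set of values of the γ-th coordinate attained by points of A₁ and the set of values of the γ-th coordinate attained by points of A_{s+1} have at least s − (s² − (r+1)t) common elements. -/
import Mathlib

open Set

noncomputable section

/-- A square of side `s` in `(ℤ/tℤ)²` with base vertex `x0`. -/
def square (t s : ℕ) (x0 : Fin 2 → ZMod t) : Set (Fin 2 → ZMod t) :=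
  {x | ∀ i, ∃ j : ℕ, j < s ∧ x i = x0 i + (j : ZMod t)}

/-- The set of values of the `γ`-th coordinate attained by points of the square with
base vertex `x0`, namely `{x0 γ, x0 γ + 1, …, x0 γ + s - 1}` in `ZMod t`. -/
def coordValues (t s : ℕ) (γ : Fin 2) (x0 : Fin 2 → ZMod t) : Set (ZMod t) :=
  {v | ∃ j : ℕ, j < s ∧ v = x0 γ + (j : ZMod t)}

/-- An interval of length `s` in `ZMod t` has exactly `s` elements when `s ≤ t`. -/
lemma card_interval (t s : ℕ) (hst : s ≤ t) (c : ZMod t) :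
    ((Finset.range s).image (fun k : ℕ => c + (k : ZMod t))).card = s := by
  rw [Finset.card_image_of_injOn, Finset.card_range]
  intro a ha b hb hab
  simp only [Finset.coe_range, Set.mem_Iio] at ha hb
  have h : (a : ZMod t) = b := add_left_cancel hab
  have h2 := congrArg ZMod.val h
  rwa [ZMod.val_cast_of_lt (lt_of_lt_of_le ha hst),
       ZMod.val_cast_of_lt (lt_of_lt_of_le hb hst)] at h2

/-- Claim 3: if both `A₁, …, A_s` and `A₂, …, A_{s+1}` cover `(ℤ/tℤ)²`, then for each
coordinate `γ`, the `γ`-coordinate sets of `A₁` and `A_{s+1}` share at least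
`s - (s² - (r+1)t)` elements. -/
theorem coordinate_sets_intersect (s t r : ℕ) (hs : 0 < s) (hst : s ≤ t)
    (hfloor : ⌊(t : ℚ) / (s : ℚ)⌋ = (r : ℤ))
    (hceil : ⌈(t : ℚ) / (s : ℚ)⌉ = (r : ℤ) + 1)
    (hts : t * (r + 1) ≤ s^2)
    (b : Fin (s + 1) → Fin 2 → ZMod t)
    (hcov1 : (⋃ j : Fin (s + 1), ⋃ (_ : (j : ℕ) < s), square t s (b j)) = Set.univ)
    (hcov2 : (⋃ j : Fin (s + 1), ⋃ (_ : (j : ℕ) ≠ 0), square t s (b j)) = Set.univ)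
    (γ : Fin 2) :
    (s : ℤ) - ((s : ℤ)^2 - (r + 1) * t) ≤
      ((coordValues t s γ (b 0) ∩ coordValues t s γ (b (Fin.last s))).ncard : ℤ) := by
  classical
  have ht0 : 0 < t := lt_of_lt_of_le hs hst
  haveI : NeZero t := ⟨ht0.ne'⟩
  -- the other coordinate
  set γ' : Fin 2 := Fin.rev γ with hγ'def
  have hne : γ' ≠ γ := by fin_cases γ <;> decide
  -- r * s < t
  have hsq : (0:ℚ) < (s:ℚ) := by exact_mod_cast hs
  have hrs : r * s < t := by
    have h1 : ((r:ℤ) : ℚ) ≤ (t:ℚ)/(s:ℚ) := by rw [← hfloor]; exact Int.floor_le _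
    have hle : (r : ℚ) * s ≤ t := by
      rw [← le_div_iff₀ hsq]; exact_mod_cast h1
    have hlen : r * s ≤ t := by exact_mod_cast hle
    rcases lt_or_eq_of_le hlen with h | h
    · exact h
    · exfalso
      have : (t:ℚ)/(s:ℚ) = (r:ℚ) := by
        rw [← h]; push_cast; field_simp
      rw [this] at hceil
      rw [show ((r:ℚ)) = ((r:ℤ):ℚ) by push_cast; ring, Int.ceil_intCast] at hceil
      omega
  -- interval finsets
  set J : Fin (s+1) → Finset (ZMod t) :=
    fun j => (Finset.range s).image (fun k : ℕ => b j γ + (k : ZMod t)) with hJdef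
  set J' : Fin (s+1) → Finset (ZMod t) :=
    fun j => (Finset.range s).image (fun k : ℕ => b j γ' + (k : ZMod t)) with hJ'def
  have hJcard : ∀ j, (J j).card = s := fun j => card_interval t s hst _
  have hJ'card : ∀ j, (J' j).card = s := fun j => card_interval t s hst _
  have hJmem : ∀ j v, v ∈ J j ↔ ∃ k : ℕ, k < s ∧ v = b j γ + (k : ZMod t) := by
    intro j v
    simp only [hJdef, Finset.mem_image, Finset.mem_range]
    constructor
    · rintro ⟨k, hk, rfl⟩; exact ⟨k, hk, rfl⟩
    · rintro ⟨k, hk, rfl⟩; exact ⟨k, hk, rfl⟩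
  -- column counting: every value is covered at least r+1 times
  have colA : ∀ (P : Fin (s+1) → Prop) [DecidablePred P],
      (⋃ j : Fin (s + 1), ⋃ (_ : P j), square t s (b j)) = Set.univ →
      ∀ v : ZMod t, r + 1 ≤ (Finset.univ.filter (fun j => P j ∧ v ∈ J j)).card := by
    intro P _ hcov v
    set F := Finset.univ.filter (fun j => P j ∧ v ∈ J j) with hF
    have hsub : (Finset.univ : Finset (ZMod t)) ⊆ F.biUnion (fun j => J' j) := by
      intro w _
      have hx : (fun i => if i = γ then v else w) ∈
          (⋃ j : Fin (s + 1), ⋃ (_ : P j), square t s (b j)) := by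
        rw [hcov]; exact Set.mem_univ _
      simp only [Set.mem_iUnion] at hx
      obtain ⟨j, hPj, hxj⟩ := hx
      have h1 : ∃ k : ℕ, k < s ∧ v = b j γ + (k : ZMod t) := by
        simpa using hxj γ
      have h2 : ∃ k : ℕ, k < s ∧ w = b j γ' + (k : ZMod t) := by
        simpa [hne] using hxj γ' 
      refine Finset.mem_biUnion.2 ⟨j, ?_, ?_⟩
      · rw [hF, Finset.mem_filter]
        refine ⟨Finset.mem_univ _, hPj, ?_⟩
        rw [hJmem]
        obtain ⟨k, hk, hkeq⟩ := h1
        exact ⟨k, hk, hkeq⟩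
      · obtain ⟨k, hk, hkeq⟩ := h2
        simp only [hJ'def, Finset.mem_image, Finset.mem_range]
        exact ⟨k, hk, hkeq.symm⟩
    have hc1 : t ≤ (F.biUnion (fun j => J' j)).card := by
      have := Finset.card_le_card hsub
      rwa [Finset.card_univ, ZMod.card] at this
    have hc2 : (F.biUnion (fun j => J' j)).card ≤ F.card * s := by
      calc (F.biUnion (fun j => J' j)).card ≤ ∑ j ∈ F, (J' j).card :=
            Finset.card_biUnion_le
        _ = ∑ j ∈ F, s := by simp [hJ'card]
        _ = F.card * s := by rw [Finset.sum_const, smul_eq_mul]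
    have : r * s < F.card * s := lt_of_lt_of_le hrs (le_trans hc1 hc2)
    exact Nat.lt_of_mul_lt_mul_right this
  -- total multiplicity
  have sumA : ∀ (P : Fin (s+1) → Prop) [DecidablePred P],
      (Finset.univ.filter P).card = s →
      ∑ v : ZMod t, (Finset.univ.filter (fun j => P j ∧ v ∈ J j)).card = s * s := by
    intro P _ hP
    have step1 : ∀ v : ZMod t, (Finset.univ.filter (fun j => P j ∧ v ∈ J j)).card
        = ∑ j : Fin (s+1), if P j ∧ v ∈ J j then 1 else 0 := by
      intro v; rw [Finset.card_filter]
    calc ∑ v : ZMod t, (Finset.univ.filter (fun j => P j ∧ v ∈ J j)).card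
        = ∑ v : ZMod t, ∑ j : Fin (s+1), if P j ∧ v ∈ J j then 1 else 0 := by
          simp only [step1]
      _ = ∑ j : Fin (s+1), ∑ v : ZMod t, if P j ∧ v ∈ J j then 1 else 0 :=
          Finset.sum_comm
      _ = ∑ j : Fin (s+1), if P j then (J j).card else 0 := by
          refine Finset.sum_congr rfl fun j _ => ?_
          by_cases hPj : P j
          · simp only [hPj, true_and, if_true]
            rw [← Finset.card_filter]
            congr 1
            exact Finset.filter_univ_mem _
          · simp [hPj]
      _ = ∑ j : Fin (s+1), if P j then s else 0 := by
          refine Finset.sum_congr rfl fun j _ => ?_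
          by_cases hPj : P j <;> simp [hPj, hJcard]
      _ = (Finset.univ.filter P).card * s := by
          rw [← Finset.sum_filter, Finset.sum_const, smul_eq_mul]
      _ = s * s := by rw [hP]
  -- cardinalities of the index sets
  have hcard1 : (Finset.univ.filter (fun j : Fin (s+1) => (j:ℕ) < s)).card = s := by
    have heq : Finset.univ.filter (fun j : Fin (s+1) => (j:ℕ) < s)
        = Finset.univ.erase (Fin.last s) := by
      ext j
      have := j.isLt
      simp only [Finset.mem_filter, Finset.mem_univ, true_and, Finset.mem_erase,
        and_true, Ne, Fin.ext_iff, Fin.val_last]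
      omega
    rw [heq, Finset.card_erase_of_mem (Finset.mem_univ _),
      Finset.card_univ, Fintype.card_fin]
    omega
  have hcard2 : (Finset.univ.filter (fun j : Fin (s+1) => (j:ℕ) ≠ 0)).card = s := by
    have heq : Finset.univ.filter (fun j : Fin (s+1) => (j:ℕ) ≠ 0)
        = Finset.univ.erase 0 := by
      ext j
      simp only [Finset.mem_filter, Finset.mem_univ, true_and, Finset.mem_erase,
        and_true, Ne, Fin.ext_iff, Fin.val_zero]
    rw [heq, Finset.card_erase_of_mem (Finset.mem_univ _),
      Finset.card_univ, Fintype.card_fin]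
    omega
  -- multiplicities
  set m : ZMod t → ℕ :=
    fun v => (Finset.univ.filter (fun j : Fin (s+1) => (j:ℕ) < s ∧ v ∈ J j)).card with hmdef
  set m' : ZMod t → ℕ :=
    fun v => (Finset.univ.filter (fun j : Fin (s+1) => (j:ℕ) ≠ 0 ∧ v ∈ J j)).card with hm'def
  have hmA : ∀ v, r + 1 ≤ m v := colA _ hcov1
  have hm'A : ∀ v, r + 1 ≤ m' v := colA _ hcov2
  have hmS : ∑ v : ZMod t, m v = s * s := sumA _ hcard1
  -- the difference set
  set D : Finset (ZMod t) := J 0 \ J (Fin.last s) with hDdef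
  have hD : ∀ v ∈ D, r + 2 ≤ m v := by
    intro v hv
    rw [hDdef, Finset.mem_sdiff] at hv
    obtain ⟨hv0, hvlast⟩ := hv
    have heq : Finset.univ.filter (fun j : Fin (s+1) => (j:ℕ) < s ∧ v ∈ J j)
        = insert 0 (Finset.univ.filter (fun j : Fin (s+1) => (j:ℕ) ≠ 0 ∧ v ∈ J j)) := by
      ext j
      simp only [Finset.mem_filter, Finset.mem_univ, true_and, Finset.mem_insert]
      constructor
      · rintro ⟨hjs, hjv⟩
        by_cases hj0 : j = 0
        · left; exact hj0
        · right; exact ⟨fun h => hj0 (Fin.ext (by simp [h])), hjv⟩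
      · rintro (rfl | ⟨hj0, hjv⟩)
        · exact ⟨by simpa using hs, hv0⟩
        · refine ⟨?_, hjv⟩
          have := j.isLt
          rcases Nat.lt_or_ge (j:ℕ) s with h' | h'
          · exact h'
          · exfalso
            have hjl : j = Fin.last s := Fin.ext (by simp [Fin.val_last]; omega)
            rw [hjl] at hjv
            exact hvlast hjv
    have h0 : (0 : Fin (s+1)) ∉
        Finset.univ.filter (fun j : Fin (s+1) => (j:ℕ) ≠ 0 ∧ v ∈ J j) := by
      simp
    have : m v = m' v + 1 := by
      rw [hmdef, hm'def]
      simp only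
      rw [heq, Finset.card_insert_of_notMem h0]
    rw [this]
    have := hm'A v
    omega
  -- bound |D| ≤ s² - (r+1)t
  have hDbound : (D.card : ℤ) ≤ (s:ℤ) * s - ((r:ℤ) + 1) * t := by
    have h1 : (D.card : ℤ) ≤ ∑ v ∈ D, ((m v : ℤ) - ((r:ℤ) + 1)) := by
      calc (D.card : ℤ) = ∑ _v ∈ D, (1:ℤ) := by
            rw [Finset.sum_const, nsmul_eq_mul, mul_one]
        _ ≤ ∑ v ∈ D, ((m v : ℤ) - ((r:ℤ) + 1)) := by
            refine Finset.sum_le_sum fun v hv => ?_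
            have := hD v hv; push_cast; omega
    have h2 : ∑ v ∈ D, ((m v : ℤ) - ((r:ℤ) + 1))
        ≤ ∑ v : ZMod t, ((m v : ℤ) - ((r:ℤ) + 1)) := by
      refine Finset.sum_le_sum_of_subset_of_nonneg (Finset.subset_univ D) ?_
      intro v _ _
      have := hmA v; push_cast; omega
    have h3 : ∑ v : ZMod t, ((m v : ℤ) - ((r:ℤ) + 1)) = (s:ℤ) * s - ((r:ℤ) + 1) * t := by
      have hmSZ : ∑ v : ZMod t, (m v : ℤ) = (s:ℤ) * s := by exact_mod_cast hmS
      rw [Finset.sum_sub_distrib, Finset.sum_const, Finset.card_univ, ZMod.card,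
        nsmul_eq_mul, hmSZ]
      ring
    linarith
  -- identify coordValues with the finsets
  have hCV : ∀ j, coordValues t s γ (b j) = ↑(J j) := by
    intro j
    ext v
    simp only [coordValues, Set.mem_setOf_eq, Finset.coe_image, Finset.mem_coe]
    rw [hJmem]
  have hinter : coordValues t s γ (b 0) ∩ coordValues t s γ (b (Fin.last s))
      = ↑(J 0 ∩ J (Fin.last s)) := by
    rw [hCV 0, hCV (Fin.last s)]
    simp
  rw [hinter, Set.ncard_coe_finset]
  have hcard_split : (J 0 ∩ J (Fin.last s)).card + D.card = s := by
    rw [hDdef, Finset.card_inter_add_card_sdiff, hJcard]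
  have : ((J 0 ∩ J (Fin.last s)).card : ℤ) = (s:ℤ) - D.card := by
    omega
  rw [this]
  push_cast at hDbound ⊢
  linarith
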